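/- Let E(v̄,s) = (4s/((2v̄+s)²-16)) · [[s+4-2v̄, 4],[(s+4)(s-2)+4v̄, 3s-4+2v̄]] for |2v̄+s| < 4. Then E(v̄,s) = A(v̄+s, 2v̄+s)⁻¹ · (J(v̄+s) - J(v̄)), where J(v) = 4·[[v-1,-1],[v(v-2),1-v]] and A(v,γ) = γI - J(v). -/

import Mathlib

noncomputable def Jmat (v : ℝ) : Matrix (Fin 2) (Fin 2) ℝ :=
  (4 : ℝ) • !![v - 1, -1; v * (v - 2), 1 - v]

noncomputable def Amat (v γ : ℝ) : Matrix (Fin 2) (Fin 2) ℝ :=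
  γ • (1 : Matrix (Fin 2) (Fin 2) ℝ) - Jmat v

noncomputable def Emat (v s : ℝ) : Matrix (Fin 2) (Fin 2) ℝ :=
  (4 * s / ((2 * v + s) ^ 2 - 16)) •
    !![s + 4 - 2 * v, 4; (s + 4) * (s - 2) + 4 * v, 3 * s - 4 + 2 * v]

theorem stmt3 (vb s : ℝ) (h : |2 * vb + s| < 4) :
    Emat vb s = (Amat (vb + s) (2 * vb + s))⁻¹ * (Jmat (vb + s) - Jmat vb) := by
  have hd : (2 * vb + s) ^ 2 - 16 ≠ 0 := by
    have := abs_lt.mp h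
    nlinarith [this.1, this.2]
  have hdet : (Amat (vb + s) (2 * vb + s)).det = (2 * vb + s) ^ 2 - 16 := by
    simp [Amat, Jmat, Matrix.det_fin_two, Matrix.smul_apply, Matrix.one_apply]
    ring
  have hu : IsUnit (Amat (vb + s) (2 * vb + s)).det := by
    rw [hdet]; exact (isUnit_iff_ne_zero).mpr hd
  have : Invertible (Amat (vb + s) (2 * vb + s)) :=
    (Amat (vb + s) (2 * vb + s)).invertibleOfIsUnitDet hu
  rw [eq_comm, Matrix.inv_mul_eq_iff_eq_mul_of_invertible, eq_comm]
  ext i j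
  fin_cases i <;> fin_cases j <;>
    · simp [Amat, Jmat, Emat, Matrix.mul_apply, Fin.sum_univ_two, Matrix.smul_apply,
        Matrix.one_apply]
      field_simp [show (vb * 2 + s) ^ 2 - 16 ≠ 0 by rwa [mul_comm vb 2]]
      ring
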